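/- For every integer n ≥ 3 divisible by 3, the circular assignment that gives the vertex k of the cycle graph C_n the color k mod 3 and gives the edge {k, k+1} the color (k+2) mod 3 (colors taken in ZMod 3) is a proper total coloring of C_n; in particular C_n admits a 3-total coloring. -/
import Mathlib


/-- A proper total coloring of `G`: `cv` colors the vertices, `ce` colors the edges
(as unordered pairs); adjacent vertices get different colors, an edge gets a color
different from both of its endpoints, and edges sharing an endpoint get different colors. -/
def IsTotalColoring {V C : Type*} (G : SimpleGraph V) (cv : V → C) (ce : Sym2 V → C) : Prop :=
  (∀ ⦃u v : V⦄, G.Adj u v → cv u ≠ cv v) ∧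
  (∀ ⦃u v : V⦄, G.Adj u v → ce s(u, v) ≠ cv u) ∧
  (∀ ⦃u v w : V⦄, G.Adj u v → G.Adj u w → v ≠ w → ce s(u, v) ≠ ce s(u, w))

/-- The total chromatic number: the least `k` such that `G` has a proper total
coloring with a set of `k` colors. -/
noncomputable def totalChromaticNumber {V : Type*} (G : SimpleGraph V) : ℕ :=
  sInf {k : ℕ | ∃ (cv : V → Fin k) (ce : Sym2 V → Fin k), IsTotalColoring G cv ce}

/-- The cycle graph `C_n` on vertex set `ZMod n`: `k` and `k+1` are adjacent. -/
def cycleGraph (n : ℕ) : SimpleGraph (ZMod n) :=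
  SimpleGraph.fromRel (fun a b => b = a + 1)

theorem cycle_circular_three_total_coloring (n : ℕ) (hn : 3 ≤ n) (h3 : 3 ∣ n) :
    ∃ ce : Sym2 (ZMod n) → ZMod 3,
      (∀ k : ZMod n, ce s(k, k + 1) = ZMod.castHom h3 (ZMod 3) k + 2) ∧
      IsTotalColoring (cycleGraph n) (fun k => ZMod.castHom h3 (ZMod 3) k) ce := by
  haveI : NeZero n := ⟨by omega⟩
  set φ := ZMod.castHom h3 (ZMod 3) with hφ
  have h2 : (2 : ZMod n) ≠ 0 := by
    have : ((2 : ℕ) : ZMod n) ≠ 0 := by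
      rw [Ne, ZMod.natCast_eq_zero_iff]
      intro h; have := Nat.le_of_dvd (by norm_num) h; omega
    simpa using this
  have hne2 : ∀ a : ZMod n, a ≠ a + 1 + 1 := by
    intro a h
    rw [add_assoc] at h
    have h11 : (1 + 1 : ZMod n) = 0 := (left_eq_add).mp h
    apply h2
    rw [show (2 : ZMod n) = 1 + 1 by norm_num]
    exact h11
  have hkey : ∀ x : ZMod 3, x + 2 ≠ x ∧ x + 2 ≠ x + 1 ∧ x + 1 ≠ x := by decide
  have hφadd : ∀ a : ZMod n, φ (a + 1) = φ a + 1 := by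
    intro a; rw [map_add, map_one]
  let f : ZMod n → ZMod n → ZMod 3 := fun a b =>
    if b = a + 1 then φ a + 2 else if a = b + 1 then φ b + 2 else 0
  have hsym : ∀ a b, f a b = f b a := by
    intro a b
    simp only [f]
    split_ifs with h1 h2' <;> try rfl
    exact absurd (h2'.trans (by rw [h1])) (hne2 a)
  refine ⟨Sym2.lift ⟨fun a b => f a b, hsym⟩, ?_, ?_, ?_, ?_⟩
  · intro k
    simp only [Sym2.lift_mk, f, if_pos rfl, if_true]
  · intro u v huv
    obtain ⟨hne, h | h⟩ := huv
    · subst h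
      simp only [hφadd]
      exact fun h' => (hkey (φ u)).2.2 h'.symm
    · subst h
      simp only [hφadd]
      exact (hkey (φ v)).2.2
  · intro u v huv
    obtain ⟨hne, h | h⟩ := huv
    · simp only [Sym2.lift_mk, f, if_pos h]
      exact (hkey (φ u)).1
    · have hv : ¬ (v = u + 1) := by
        intro h'; rw [h] at h'; exact hne2 v h'
      simp only [Sym2.lift_mk, f, if_neg hv, if_pos h]
      rw [h, hφadd]
      exact (hkey (φ v)).2.1
  · intro u v w huv huw hvw
    have edge_val : ∀ x : ZMod n, (cycleGraph n).Adj u x →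
        Sym2.lift ⟨fun a b => f a b, hsym⟩ s(u, x) =
          (if x = u + 1 then φ u + 2 else φ u + 1) := by
      intro x hx
      obtain ⟨hne, h | h⟩ := hx
      · simp only [Sym2.lift_mk, f, if_pos h]
      · have hx1 : ¬ (x = u + 1) := by
          intro h'; rw [h] at h'; exact hne2 x h'
        simp only [Sym2.lift_mk, f, if_neg hx1, if_pos h]
        rw [h, hφadd]
        ring
    rw [edge_val v huv, edge_val w huw]
    obtain ⟨hnev, hv | hv⟩ := huv <;> obtain ⟨hnew, hw | hw⟩ := huw
    · exact absurd (hv.trans hw.symm) hvw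
    · have hw1 : ¬ (w = u + 1) := by
        intro h'; rw [hw] at h'; exact hne2 w h'
      rw [if_pos hv, if_neg hw1]
      exact (hkey (φ u)).2.1
    · have hv1 : ¬ (v = u + 1) := by
        intro h'; rw [hv] at h'; exact hne2 v h'
      rw [if_neg hv1, if_pos hw]
      exact fun h => (hkey (φ u)).2.1 h.symm
    · exact absurd (add_right_cancel (hv.symm.trans hw)) hvw
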